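/- Let S be a positive definite Hermitian matrix with σ(S) ⊆ (0, 3), and define γ₀ = g, γ_{k+1} = (3/2)γ_k − (1/2)S_k γ_k, where S_k is defined via γ_k = ψ_k(S)g and S_k = S ψ_k(S)²; equivalently ψ₀ = 1 and ψ_{k+1}(s) = ψ_k(s)·((3/2) − (1/2) s ψ_k(s)²). Set q_k(s) = s ψ_k(s)². Then q_{k+1}(s) = q_k(s)((3/2) − q_k(s)/2)² for every s, q_k(s) → 1 for all s ∈ σ(S), and γ_k → S^{-1/2}g. -/

import Mathlib

open Filter

set_option maxHeartbeats 1000000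

lemma stmt19_aux_nonneg {x : ℝ} (h : -2 < x) : 0 ≤ x ^ 2 * (3 + x) / 4 := by
  nlinarith [sq_nonneg x]

lemma stmt19_aux_step_le {x c : ℝ} (h1 : 0 ≤ x) (h2 : x < 1) (h3 : x ≤ c) :
    x ^ 2 * (3 + x) / 4 ≤ x * c := by
  nlinarith [mul_nonneg (mul_nonneg h1 h1) (show (0:ℝ) ≤ 1 - x by linarith),
    mul_nonneg h1 (sub_nonneg.mpr h3)]

/-- Invariant: the scalar iteration stays in `(0,3)` (equivalently `e = 1 - r ∈ (-2,1)`). -/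
lemma stmt19_aux_inv (r : ℕ → ℝ) (h0 : 0 < r 0) (h3 : r 0 < 3)
    (hrec : ∀ k, r (k + 1) = r k * ((3/2) - r k / 2) ^ 2) :
    ∀ k, 0 < r k ∧ r k < 3 := by
  intro k
  induction k with
  | zero => exact ⟨h0, h3⟩
  | succ k ih =>
    obtain ⟨h1, h2⟩ := ih
    rw [hrec]
    constructor
    · have h : (0:ℝ) < (3/2) - r k / 2 := by linarith
      exact mul_pos h1 (by positivity)
    · nlinarith [mul_nonneg (sq_nonneg (1 - r k)) (show (0:ℝ) ≤ 4 - r k by linarith)]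

/-- Convergence of the scalar iteration. -/
lemma stmt19_aux_tendsto (r : ℕ → ℝ) (h0 : 0 < r 0) (h3 : r 0 < 3)
    (hrec : ∀ k, r (k + 1) = r k * ((3/2) - r k / 2) ^ 2) :
    Tendsto r atTop (nhds 1) := by
  have hinv := stmt19_aux_inv r h0 h3 hrec
  set e : ℕ → ℝ := fun k => 1 - r k with he
  have herec : ∀ k, e (k + 1) = (e k) ^ 2 * (3 + e k) / 4 := by
    intro k; simp only [he]; rw [hrec]; ring
  have hE : ∀ k, -2 < e k ∧ e k < 1 := by
    intro k
    obtain ⟨h1, h2⟩ := hinv k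
    constructor <;> simp only [he] <;> linarith
  have hnn : ∀ k, 0 ≤ e (k + 1) := by
    intro k
    rw [herec]
    exact stmt19_aux_nonneg (hE k).1
  set c := e 1 with hc
  have hc0 : 0 ≤ c := hnn 0
  have hc1 : c < 1 := (hE 1).2
  have hbound : ∀ k, e (k + 1) ≤ c ^ (k + 1) := by
    intro k
    induction k with
    | zero => simp; exact le_of_eq hc.symm
    | succ k ih =>
      have h1 : 0 ≤ e (k + 1) := hnn k
      have h2 : e (k + 1) < 1 := (hE (k + 1)).2
      have hck : c ^ (k + 1) ≤ c := pow_le_of_le_one hc0 hc1.le (Nat.succ_ne_zero k)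
      have h3' : e (k + 1) ≤ c := ih.trans hck
      calc e (k + 1 + 1) = (e (k + 1)) ^ 2 * (3 + e (k + 1)) / 4 := herec (k + 1)
        _ ≤ e (k + 1) * c := stmt19_aux_step_le h1 h2 h3'
        _ ≤ c ^ (k + 1) * c := by nlinarith
        _ = c ^ (k + 1 + 1) := by ring
  have hcpow : Tendsto (fun k : ℕ => c ^ k) atTop (nhds 0) :=
    tendsto_pow_atTop_nhds_zero_of_lt_one hc0 hc1
  have hE0 : Tendsto e atTop (nhds 0) := by
    refine tendsto_of_tendsto_of_tendsto_of_le_of_le' tendsto_const_nhds hcpow ?_ ?_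
    · filter_upwards [eventually_ge_atTop 1] with k hk
      obtain ⟨m, rfl⟩ : ∃ m, k = m + 1 := ⟨k - 1, (Nat.succ_pred_eq_of_pos hk).symm⟩
      exact hnn m
    · filter_upwards [eventually_ge_atTop 1] with k hk
      obtain ⟨m, rfl⟩ : ∃ m, k = m + 1 := ⟨k - 1, (Nat.succ_pred_eq_of_pos hk).symm⟩
      exact hbound m
  have : Tendsto (fun k => 1 - e k) atTop (nhds (1 - 0)) :=
    tendsto_const_nhds.sub hE0
  simpa only [he, sub_sub_cancel, sub_zero] using this

/-- Tight-window algorithm II with initial scaling on a positive definite Hermitian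
matrix with `σ(S) ⊆ (0,3)`: with `γ_k = ψ_k(S)g`, `ψ₀ = 1`,
`ψ_{k+1}(s) = ψ_k(s)((3/2) − (1/2)s·ψ_k(s)²)` and `q_k(s) = s·ψ_k(s)²`, one has
`q_{k+1}(s) = q_k(s)((3/2) − q_k(s)/2)²`, `q_k(s) → 1` on `σ(S)`, and
`γ_k → S^{-1/2}g`. -/
theorem stmt19 {n : ℕ}
    (S : EuclideanSpace ℂ (Fin n) →L[ℂ] EuclideanSpace ℂ (Fin n))
    (hS : IsSelfAdjoint S)
    (hpos : ∀ x : EuclideanSpace ℂ (Fin n), x ≠ 0 → 0 < (inner ℂ (S x) x : ℂ).re)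
    (hspec : spectrum ℝ S ⊆ Set.Ioo (0 : ℝ) 3)
    (g : EuclideanSpace ℂ (Fin n))
    (ψ : ℕ → ℝ → ℝ) (hψ0 : ∀ s, ψ 0 s = 1)
    (hψ : ∀ k s, ψ (k + 1) s = ψ k s * ((3/2) - (1/2) * s * (ψ k s) ^ 2))
    (q : ℕ → ℝ → ℝ) (hq : ∀ k s, q k s = s * (ψ k s) ^ 2) :
    (∀ k s, q (k + 1) s = q k s * ((3/2) - q k s / 2) ^ 2) ∧
    (∀ s ∈ spectrum ℝ S, Tendsto (fun k => q k s) atTop (nhds 1)) ∧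
    Tendsto (fun k => (cfc (ψ k) S) g) atTop
      (nhds ((cfc (fun s : ℝ => s ^ (-(1/2) : ℝ)) S) g)) := by
  have hrec : ∀ k s, q (k + 1) s = q k s * ((3/2) - q k s / 2) ^ 2 := by
    intro k s
    simp only [hq, hψ]
    ring
  have hq0 : ∀ s ∈ spectrum ℝ S, 0 < q 0 s ∧ q 0 s < 3 := by
    intro s hs
    obtain ⟨hs0, hs3⟩ := hspec hs
    rw [hq, hψ0]
    constructor <;> nlinarith
  have htend : ∀ s ∈ spectrum ℝ S, Tendsto (fun k => q k s) atTop (nhds 1) := by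
    intro s hs
    exact stmt19_aux_tendsto (fun k => q k s) (hq0 s hs).1 (hq0 s hs).2 (fun k => hrec k s)
  refine ⟨hrec, htend, ?_⟩
  -- part 3
  set f : ℝ → ℝ := fun s => s ^ (-(1/2) : ℝ) with hf
  -- spectrum is finite
  have hfin : (spectrum ℝ S).Finite := by
    have eAlg : (EuclideanSpace ℂ (Fin n) →ₗ[ℂ] EuclideanSpace ℂ (Fin n)) ≃ₐ[ℂ]
        (EuclideanSpace ℂ (Fin n) →L[ℂ] EuclideanSpace ℂ (Fin n)) :=
      AlgEquiv.ofLinearEquiv LinearMap.toContinuousLinearMap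
        (by ext x; rfl) (fun x y => by ext x; rfl)
    have h1 : (spectrum ℂ S).Finite := by
      have := AlgEquiv.spectrum_eq eAlg (eAlg.symm S)
      rw [eAlg.apply_symm_apply] at this
      rw [this]
      exact Module.End.finite_spectrum (eAlg.symm S)
    have h2 : spectrum ℝ S = Complex.reCLM '' spectrum ℂ S :=
      (hS.spectrumRestricts.image).symm
    rw [h2]
    exact h1.image _
  -- positivity of ψ k on the spectrum
  have hψpos : ∀ s ∈ spectrum ℝ S, ∀ k, 0 < ψ k s := by
    intro s hs k
    induction k with
    | zero => rw [hψ0]; norm_num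
    | succ k ih =>
      have hq3 := (stmt19_aux_inv (fun k => q k s) (hq0 s hs).1 (hq0 s hs).2
        (fun k => hrec k s) k).2
      have : (1/2 : ℝ) * s * (ψ k s) ^ 2 = q k s / 2 := by rw [hq]; ring
      rw [hψ, this]
      have : (0:ℝ) < (3/2) - q k s / 2 := by linarith
      exact mul_pos ih this
  -- pointwise convergence of ψ k to f on the spectrum
  have hpt : ∀ s ∈ spectrum ℝ S, Tendsto (fun k => ψ k s) atTop (nhds (f s)) := by
    intro s hs
    obtain ⟨hs0, hs3⟩ := hspec hs
    have hrepr : ∀ k, ψ k s = Real.sqrt (q k s / s) := by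
      intro k
      have h1 : (ψ k s) ^ 2 = q k s / s := by
        rw [hq]; field_simp
      rw [← h1, Real.sqrt_sq (hψpos s hs k).le]
    have hlim : Tendsto (fun k => Real.sqrt (q k s / s)) atTop
        (nhds (Real.sqrt (1 / s))) := by
      have := (htend s hs).div_const s
      exact (Real.continuous_sqrt.tendsto _).comp this
    have hfs : Real.sqrt (1 / s) = f s := by
      rw [hf]
      simp only
      rw [one_div, Real.sqrt_inv, Real.sqrt_eq_rpow, Real.rpow_neg hs0.le]
    rw [← hfs]
    simpa only [hrepr] using hlim
  -- continuity facts
  have hψc : ∀ k, Continuous (ψ k) := by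
    intro k
    induction k with
    | zero =>
      have : ψ 0 = fun _ => (1:ℝ) := funext hψ0
      rw [this]; exact continuous_const
    | succ k ih =>
      have : ψ (k + 1) = fun s => ψ k s * ((3/2) - (1/2) * s * (ψ k s) ^ 2) :=
        funext (hψ k)
      rw [this]
      fun_prop
  have hfc : ContinuousOn f (spectrum ℝ S) := by
    intro s hs
    have hs0 := (hspec hs).1
    exact (Real.continuousAt_rpow_const s _ (Or.inl hs0.ne')).continuousWithinAt
  -- operator norm convergence
  have key : Tendsto (fun k => cfc (ψ k) S) atTop (nhds (cfc f S)) := by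
    rw [Metric.tendsto_atTop]
    intro ε hε
    have hev : ∀ᶠ k in atTop, ∀ s ∈ hfin.toFinset, |ψ k s - f s| ≤ ε / 2 := by
      rw [eventually_all_finset]
      intro s hs
      have hs' : s ∈ spectrum ℝ S := hfin.mem_toFinset.mp hs
      have := (hpt s hs')
      rw [Metric.tendsto_atTop] at this
      obtain ⟨N, hN⟩ := this (ε / 2) (by linarith)
      rw [eventually_atTop]
      exact ⟨N, fun k hk => by
        have := hN k hk
        rw [Real.dist_eq] at this
        linarith⟩
    rw [eventually_atTop] at hev
    obtain ⟨N, hN⟩ := hev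
    refine ⟨N, fun k hk => ?_⟩
    rw [dist_eq_norm]
    have hsub : cfc (ψ k) S - cfc f S = cfc (fun s => ψ k s - f s) S :=
      (cfc_sub (ψ k) f S ((hψc k).continuousOn) hfc).symm
    rw [hsub]
    have hle : ‖cfc (fun s => ψ k s - f s) S‖ ≤ ε / 2 := by
      refine norm_cfc_le (by linarith) fun x hx => ?_
      rw [Real.norm_eq_abs]
      exact hN k hk x (hfin.mem_toFinset.mpr hx)
    linarith
  -- apply at g
  have hcont : Continuous fun T : EuclideanSpace ℂ (Fin n) →L[ℂ] EuclideanSpace ℂ (Fin n) =>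
      T g := (ContinuousLinearMap.apply ℂ (EuclideanSpace ℂ (Fin n)) g).continuous
  exact (hcont.tendsto (cfc f S)).comp key
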